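/- For every integer n ≥ 5, if φ = parent(ψ) for seeds φ, ψ, then perms(φ) ∩ perms(ψ) = cycle(ψ̃), the set of the n cyclic shifts of ψ̃; in particular, when ψ = son(φ, i), the permutation φ^(i) belongs to cycle(ψ̃). -/

import Mathlib

/-- `σ`: cyclic left shift by one position. -/
def sig (l : List ℕ) : List ℕ := l.rotate 1

/-- `τ`: transposition of the first two entries. -/
def tau : List ℕ → List ℕ
  | a :: b :: rest => b :: a :: rest
  | l => l

/-- Apply a word over the alphabet {σ,τ} (encoded: `false` = σ, `true` = τ)
letter by letter, from left to right. -/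
def applyWord (w : List Bool) (l : List ℕ) : List ℕ :=
  w.foldl (fun p c => if c then tau p else sig p) l

/-- `l` is an n-permutation: a sequence containing each of 1,…,n exactly once. -/
def IsPerm (n : ℕ) (l : List ℕ) : Prop := l.Perm (List.range' 1 n)

/-- The permutation (n, n−1, …, 1). -/
def descList (n : ℕ) : List ℕ := (List.range n).reverse.map (· + 1)

/-- Cyclic successor ⊕1 on {1,…,n−1}. -/
def osucc (n a : ℕ) : ℕ := if a = n - 1 then 1 else a + 1

/-- Cyclic predecessor ⊖1 on {1,…,n−1}. -/
def opred (n a : ℕ) : ℕ := if a = 1 then n - 1 else a - 1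

/-- From a seed (a₁, a₂, …, a_{n−1}) form (a₁, a₂⊕1, a₂, …, a_{n−1}). -/
def seedToPerm (n : ℕ) : List ℕ → List ℕ
  | a1 :: a2 :: rest => a1 :: osucc n a2 :: a2 :: rest
  | l => l

/-- ψ is a seed: an (n−1)-tuple of distinct elements of {1,…,n} with first entry n
such that (a₁, a₂⊕1, a₂, …, a_{n−1}) is an n-permutation. -/
def IsSeed (n : ℕ) (ψ : List ℕ) : Prop :=
  ψ.length = n - 1 ∧ ψ.head? = some n ∧ IsPerm n (seedToPerm n ψ)

/-- The missing element mis(ψ) = a₂⊕1. -/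
def mis (n : ℕ) (ψ : List ℕ) : ℕ := osucc n (ψ.getD 1 0)

/-- The package perms(ψ): all permutations obtained by inserting mis(ψ)
at any position of ψ and then taking any cyclic shift. -/
def perms (n : ℕ) (ψ : List ℕ) : Set (List ℕ) :=
  { π | ∃ i j, i ≤ ψ.length ∧ π = (ψ.insertIdx i (mis n ψ)).rotate j }

/-- cycle(π): the set of cyclic shifts of π. -/
def cycle (π : List ℕ) : Set (List ℕ) := { ρ | ∃ j, ρ = π.rotate j }

/-- ψ̃ = (a₁, mis(ψ), a₂, …, a_{n−1}). -/
def tildeSeed (n : ℕ) (ψ : List ℕ) : List ℕ :=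
  match ψ with
  | a1 :: rest => a1 :: mis n ψ :: rest
  | [] => []

/-- ψ^(i) (for 1 ≤ i ≤ n−1): the right cyclic shift of ψ by i−1 positions
with mis(ψ) prepended; for i = n−1 this is (x, a₂, …, a_{n−1}, a₁). -/
def seedShift (n : ℕ) (ψ : List ℕ) (i : ℕ) : List ℕ := mis n ψ :: ψ.rotate (n - i)

/-- Length of the maximal initial run a = b⊕1 in a list. -/
def decRun (n : ℕ) : List ℕ → ℕ
  | a :: b :: rest => if a = osucc n b then decRun n (b :: rest) + 1 else 1
  | [_] => 1
  | [] => 0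

/-- height(ψ): the largest k with aᵢ = a_{i+1}⊕1 for all 2 ≤ i ≤ k. -/
def height (n : ℕ) (ψ : List ℕ) : ℕ := decRun n ψ.tail

/-- The hub seed (n, b, b⊖1, …, b⊖(n−3)). -/
def hubSeed (n b : ℕ) : List ℕ := n :: (List.range (n - 2)).map (fun j => (opred n)^[j] b)

/-- Hubₙ: the set of hub seeds. -/
def Hub (n : ℕ) : Set (List ℕ) := { ψ | ∃ b, 1 ≤ b ∧ b ≤ n - 1 ∧ ψ = hubSeed n b }

/-- `IsParent n ψ β` means ψ = parent(β): ψ, β are neighboring distinct seeds,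
height(ψ) > 1 and mis(ψ) = mis(β)⊕1. -/
def IsParent (n : ℕ) (par child : List ℕ) : Prop :=
  IsSeed n par ∧ IsSeed n child ∧ par ≠ child ∧
  (perms n par ∩ perms n child).Nonempty ∧
  1 < height n par ∧ mis n par = osucc n (mis n child)

/-- `IsSon n β ψ i` means β = son(ψ, i), i.e. β is a seed with σ^i(ψ^(i)) = β̃. -/
def IsSon (n : ℕ) (child par : List ℕ) (i : ℕ) : Prop :=
  IsSeed n child ∧ sig^[i] (seedShift n par i) = tildeSeed n child

/-- γ_k = σ^k τ. -/
def gam (k : ℕ) : List Bool := List.replicate k false ++ [true]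

/-- W_0 = σ and W_k = τ · ∏_{i=1}^{n−2} σ^i W_{Δ(k,i)} γ_{n−2−i},
where Δ(k,i) = min(k−1, n−2−i). -/
def W (n : ℕ) : ℕ → List Bool
  | 0 => [false]
  | k + 1 => true :: ((List.range (n - 2)).map (fun j =>
      List.replicate (j + 1) false ++ W n (min k (n - 2 - (j + 1))) ++
        gam (n - 2 - (j + 1)))).flatten
  termination_by k => k
  decreasing_by omega

/-- V_n = γ_{n−3} · ∏_{i=2}^{n−3} σ^i W_{Δ(n−3,i)} γ_{n−2−i} · σ^{n−1}. -/
def V (n : ℕ) : List Bool :=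
  gam (n - 3) ++
  ((List.range (n - 4)).map (fun j =>
    List.replicate (j + 2) false ++ W n (min (n - 4) (n - 2 - (j + 2))) ++
      gam (n - 2 - (j + 2)))).flatten ++
  List.replicate (n - 1) false

/-- SEQ_n = γ₁^{n−2} σ² (V_n τ)^{n−2} V_n. -/
def SEQ (n : ℕ) : List Bool :=
  (List.replicate (n - 2) (gam 1)).flatten ++ List.replicate 2 false ++
  (List.replicate (n - 2) (V n ++ [true])).flatten ++ V n

/-- r: the first element after the value n in the left-to-right cyclic reading
of π with the entry p₂ skipped. -/
def rVal (n : ℕ) (π : List ℕ) : ℕ :=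
  match π with
  | p1 :: _ :: rest =>
      let l := p1 :: rest
      l.getD ((l.idxOf n + 1) % l.length) 0
  | _ => 0

/-- The Sawada–Williams successor function `next`. -/
def swNext (n : ℕ) (π : List ℕ) : List ℕ :=
  if π = descList n then sig π
  else if π.getD 1 0 ≠ n ∧ π.getD 1 0 = osucc n (rVal n π) then tau π else sig π

/-- GEN(π, α): all permutations visited (including π) when α is applied to π. -/
def GEN (α : List Bool) (π : List ℕ) : Set (List ℕ) :=
  { ρ | ∃ t, t ≤ α.length ∧ ρ = applyWord (α.take t) π }

/-- Tree(ψ): ψ together with all seeds from which ψ is reachable by parent links. -/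
def SeedTree (n : ℕ) (ψ : List ℕ) : Set (List ℕ) :=
  { β | Relation.ReflTransGen (fun x y => IsParent n y x) β ψ }

/-- bunch(ψ) = (⋃_{β ∈ Tree(ψ)} perms(β) ∖ cycle(ψ̃)) ∪ {ψ̃, ψ^(n−1)}. -/
def bunch (n : ℕ) (ψ : List ℕ) : Set (List ℕ) :=
  ((⋃ β ∈ SeedTree n ψ, perms n β) \ cycle (tildeSeed n ψ)) ∪
    {tildeSeed n ψ, seedShift n ψ (n - 1)}

/-- rank(π): the number of initial letters of SEQ_n needed to reach π from
π₀ = τ((n, n−1, …, 1)). -/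
noncomputable def rank (n : ℕ) (π : List ℕ) : ℕ :=
  sInf { t | applyWord ((SEQ n).take t) (tau (descList n)) = π }

/-- SUM(k,j) = |τ · ∏_{i=1}^{j−1} σ^i W_{Δ(k,i)} γ_{n−2−i}| + j. -/
def SUMw (n k j : ℕ) : ℕ :=
  (true :: ((List.range (j - 1)).map (fun m =>
    List.replicate (m + 1) false ++ W n (min (k - 1) (n - 2 - (m + 1))) ++
      gam (n - 2 - (m + 1)))).flatten).length + j

/-- ord(ψ): the position of the entry mis(ψ)⊕1 in ψ, counted from the right end. -/
def ord (n : ℕ) (ψ : List ℕ) : ℕ := ψ.length - ψ.idxOf (osucc n (mis n ψ))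

/-- Length of the continuation of the maximal decreasing subsequence starting
with current value `cur`. -/
def chainLen (n : ℕ) : List ℕ → ℕ → ℕ
  | [], _ => 0
  | b :: rest, cur => if cur = osucc n b then chainLen n rest b + 1 else chainLen n rest cur

/-- level(ψ) = n − m − 3, where m+1 is the length of dec_seq(ψ). -/
def level (n : ℕ) (ψ : List ℕ) : ℕ := n - chainLen n (ψ.drop 2) (ψ.getD 1 0) - 3


lemma perm_insertIdx' (x : ℕ) : ∀ (i : ℕ) (l : List ℕ), i ≤ l.length →
    (l.insertIdx i x).Perm (x :: l) := by
  intro i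
  induction i with
  | zero => intro l _; simp
  | succ k ih =>
    intro l hl
    cases l with
    | nil => simp at hl
    | cons a t =>
      rw [List.insertIdx_succ_cons]
      exact (List.Perm.cons a (ih t (by simpa using hl))).trans (List.Perm.swap x a t)

lemma next_idx (l : List ℕ) (h : l.Nodup) {i j x y : ℕ} (hi : i < l.length) (hj : j < l.length)
    (hx : l[i] = x) (hy : l[j] = y) (hij : (i + 1) % l.length = j) (hm : x ∈ l) :
    l.next x hm = y := by
  subst hx hy hij
  exact List.next_getElem l h i hi

lemma key_lemma (n b c y : ℕ) (r r' : List ℕ) (hn : 5 ≤ n)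
    (hφ : (n :: y :: b :: c :: r).Perm (List.range' 1 n))
    (hψ : (n :: b :: c :: r').Perm (List.range' 1 n))
    {i i' : ℕ} (hi : i ≤ n - 1) (hi' : i' ≤ n - 1)
    (hrot : ((n::b::c::r).insertIdx i y) ~r ((n::c::r').insertIdx i' b)) :
    i' = 1 := by
  have hlr : r.length = n - 4 := by have := hφ.length_eq; simp at this; omega
  have hlr' : r'.length = n - 3 := by have := hψ.length_eq; simp at this; omega
  have hndφ : (n :: y :: b :: c :: r).Nodup := hφ.nodup_iff.mpr List.nodup_range'
  have hndψ : (n :: b :: c :: r').Nodup := hψ.nodup_iff.mpr List.nodup_range'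
  have hd1 := hndφ
  simp only [List.nodup_cons, List.mem_cons, not_or] at hd1
  obtain ⟨⟨hny, hnb, hnc, -⟩, ⟨hyb, hyc, -⟩, ⟨hbc, -⟩, -⟩ := hd1
  have hndψ2 : (n :: c :: r').Nodup :=
    hndψ.sublist (List.Sublist.cons₂ n ((List.Sublist.refl (c::r')).cons b))
  have hψlen : (n :: c :: r').length = n - 1 := by simp; omega
  have hφlen : (n :: b :: c :: r).length = n - 1 := by simp; omega
  set P1 : List ℕ := (n::c::r').insertIdx i' b with hP1d
  set P2 : List ℕ := (n::b::c::r).insertIdx i y with hP2d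
  have hL1 : P1.length = n := by rw [hP1d, List.length_insertIdx_of_le_length (by omega)]; omega
  have hL2 : P2.length = n := by rw [hP2d, List.length_insertIdx_of_le_length (by omega)]; omega
  have hP1p : P1.Perm (n :: b :: c :: r') :=
    (perm_insertIdx' b i' _ (by omega)).trans (List.Perm.swap n b (c :: r'))
  have hP2p : P2.Perm (n :: y :: b :: c :: r) :=
    (perm_insertIdx' y i _ (by omega)).trans (List.Perm.swap n y (b :: c :: r))
  have hnd1 : P1.Nodup := hP1p.nodup_iff.mpr hndψ
  have hnd2 : P2.Nodup := hP2p.nodup_iff.mpr hndφ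
  have hb2 : b ∈ P2 := hP2p.mem_iff.mpr (by simp)
  have hn2 : n ∈ P2 := hP2p.mem_iff.mpr (by simp)
  have hnext_b := List.isRotated_next_eq hrot hnd2 hb2
  have hnext_n := List.isRotated_next_eq hrot hnd2 hn2
  set hb1 : b ∈ P1 := hrot.mem_iff.mp hb2
  set hn1 : n ∈ P1 := hrot.mem_iff.mp hn2
  -- next n in P1
  have nnP1 : (P1.next n hn1 = b ∧ i' = 1) ∨ P1.next n hn1 = c := by
    match i', hi' with
    | 0, _ =>
      right
      have hP1e : P1 = b :: n :: c :: r' := by rw [hP1d]; simp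
      exact next_idx P1 hnd1 (i := 1) (j := 2) (by omega) (by omega)
        (by simp [hP1e]) (by simp [hP1e]) (by rw [hL1]; exact Nat.mod_eq_of_lt (by omega)) hn1
    | 1, _ =>
      left
      have hP1e : P1 = n :: b :: c :: r' := by rw [hP1d]; simp
      exact ⟨next_idx P1 hnd1 (i := 0) (j := 1) (by omega) (by omega)
        (by simp [hP1e]) (by simp [hP1e]) (by rw [hL1]; exact Nat.mod_eq_of_lt (by omega)) hn1, rfl⟩
    | (k+2), hk =>
      right
      refine next_idx P1 hnd1 (i := 0) (j := 1) (by omega) (by omega) ?_ ?_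
        (by rw [hL1]; exact Nat.mod_eq_of_lt (by omega)) hn1
      · simp only [hP1d]; rw [List.getElem_insertIdx_of_lt (by omega) (by rw [List.length_insertIdx_of_le_length (by rw [hψlen]; omega)]; omega)]; rfl
      · simp only [hP1d]; rw [List.getElem_insertIdx_of_lt (by omega) (by rw [List.length_insertIdx_of_le_length (by rw [hψlen]; omega)]; omega)]; rfl
  -- next b in P1
  have nbP1 : (P1.next b hb1 = n ∧ i' = n - 1) ∨
      ∃ h : i' < n - 1, P1.next b hb1 = (n::c::r')[i']'(by omega) := by
    rcases Nat.lt_or_ge i' (n-1) with hlt | hge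
    · right
      refine ⟨hlt, next_idx P1 hnd1 (i := i') (j := i'+1) (by omega) (by omega) ?_ ?_
        (by rw [hL1]; exact Nat.mod_eq_of_lt (by omega)) hb1⟩
      · simp only [hP1d]; exact List.getElem_insertIdx_self (by rw [List.length_insertIdx_of_le_length (by rw [hψlen]; omega)]; omega)
      · simp only [hP1d]
        have := List.getElem_insertIdx_add_succ (n::c::r') b i' 0 (by rw [hψlen]; omega)
        simpa using this
    · left
      have hie : i' = n - 1 := by omega
      refine ⟨next_idx P1 hnd1 (i := i') (j := 0) (by omega) (by omega) ?_ ?_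
        (by rw [hL1, hie, Nat.sub_add_cancel (by omega), Nat.mod_self]) hb1, hie⟩
      · simp only [hP1d]; exact List.getElem_insertIdx_self (by rw [List.length_insertIdx_of_le_length (by rw [hψlen]; omega)]; omega)
      · simp only [hP1d]; rw [List.getElem_insertIdx_of_lt (by omega) (by rw [List.length_insertIdx_of_le_length (by rw [hψlen]; omega)]; omega)]; rfl
  by_cases hc1 : i = 1
  · -- P2 = n :: y :: b :: c :: r, next n = y
    have e2 : P2.next n hn2 = y := by
      have hP2e : P2 = n :: y :: b :: c :: r := by rw [hP2d, hc1]; simp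
      exact next_idx P2 hnd2 (i := 0) (j := 1) (by omega) (by omega)
        (by simp [hP2e]) (by simp [hP2e]) (by rw [hL2]; exact Nat.mod_eq_of_lt (by omega)) hn2
    rcases nnP1 with ⟨e1, -⟩ | e1
    · exact absurd (e2.symm.trans (hnext_n.trans e1)) hyb
    · exact absurd (e2.symm.trans (hnext_n.trans e1)) hyc
  by_cases hc2 : i = 2
  · -- next n in P2 = b ⇒ i' = 1 ⇒ next b in P1 = c, but next b in P2 = y
    have e2 : P2.next n hn2 = b := by
      refine next_idx P2 hnd2 (i := 0) (j := 1) (by omega) (by omega) ?_ ?_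
        (by rw [hL2]; exact Nat.mod_eq_of_lt (by omega)) hn2
      · simp only [hP2d]; rw [List.getElem_insertIdx_of_lt (by omega) (by rw [List.length_insertIdx_of_le_length (by rw [hφlen]; omega)]; omega)]; rfl
      · simp only [hP2d]; rw [List.getElem_insertIdx_of_lt (by omega) (by rw [List.length_insertIdx_of_le_length (by rw [hφlen]; omega)]; omega)]; rfl
    have hi'1 : i' = 1 := by
      rcases nnP1 with ⟨-, h⟩ | e1
      · exact h
      · exact absurd (e2.symm.trans (hnext_n.trans e1)) hbc
    subst hi'1
    -- next b in P2 = y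
    have e3 : P2.next b hb2 = y := by
      refine next_idx P2 hnd2 (i := 1) (j := 2) (by omega) (by omega) ?_ ?_
        (by rw [hL2]; exact Nat.mod_eq_of_lt (by omega)) hb2
      · simp only [hP2d]; rw [List.getElem_insertIdx_of_lt (by omega) (by rw [List.length_insertIdx_of_le_length (by rw [hφlen]; omega)]; omega)]; rfl
      · simp only [hP2d, hc2]; exact List.getElem_insertIdx_self (by rw [List.length_insertIdx_of_le_length (by rw [hφlen]; omega)]; omega)
    rcases nbP1 with ⟨-, h⟩ | ⟨hlt, e1⟩
    · omega
    · have h2 : y = (n::c::r')[1]'(by simp) := e3.symm.trans (hnext_b.trans e1)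
      simp at h2
      exact absurd h2 hyc
  · -- i ≠ 1, 2 : next b in P2 = c
    have e3 : P2.next b hb2 = c := by
      rcases Nat.eq_zero_or_pos i with hi0 | hipos
      · have hP2e : P2 = y :: n :: b :: c :: r := by rw [hP2d, hi0]; simp
        exact next_idx P2 hnd2 (i := 2) (j := 3) (by omega) (by omega)
          (by simp [hP2e]) (by simp [hP2e]) (by rw [hL2]; exact Nat.mod_eq_of_lt (by omega)) hb2
      · have hi3 : 3 ≤ i := by omega
        refine next_idx P2 hnd2 (i := 1) (j := 2) (by omega) (by omega) ?_ ?_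
          (by rw [hL2]; exact Nat.mod_eq_of_lt (by omega)) hb2
        · simp only [hP2d]; rw [List.getElem_insertIdx_of_lt (by omega) (by rw [List.length_insertIdx_of_le_length (by rw [hφlen]; omega)]; omega)]; rfl
        · simp only [hP2d]; rw [List.getElem_insertIdx_of_lt (by omega) (by rw [List.length_insertIdx_of_le_length (by rw [hφlen]; omega)]; omega)]; rfl
    rcases nbP1 with ⟨e1, -⟩ | ⟨hlt, e1⟩
    · exact absurd (e3.symm.trans (hnext_b.trans e1)).symm hnc
    · have hh : (n::c::r')[i']'(by rw [hψlen]; omega) = (n::c::r')[1]'(by simp) :=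
        (e1.symm.trans (hnext_b.symm.trans e3)).trans rfl
      exact (List.Nodup.getElem_inj_iff hndψ2).mp hh

lemma sig_iterate (i : ℕ) (l : List ℕ) : sig^[i] l = l.rotate i := by
  induction i with
  | zero => simp
  | succ k ih => rw [Function.iterate_succ_apply', ih, sig, List.rotate_rotate]

lemma osucc_inj' (n a b : ℕ) (ha1 : 1 ≤ a) (ha2 : a ≤ n - 1) (hb1 : 1 ≤ b) (hb2 : b ≤ n - 1)
    (h : osucc n a = osucc n b) : a = b := by
  unfold osucc at h; split_ifs at h <;> omega

/-- if φ = parent(ψ) then perms(φ) ∩ perms(ψ) = cycle(ψ̃);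
in particular when ψ = son(φ, i), φ^(i) ∈ cycle(ψ̃). -/
theorem parent_intersection_eq_cycle (n : ℕ) (hn : 5 ≤ n) (φ ψ : List ℕ)
    (hpar : IsParent n φ ψ) :
    perms n φ ∩ perms n ψ = cycle (tildeSeed n ψ) ∧
    ∀ i, IsSon n ψ φ i → seedShift n φ i ∈ cycle (tildeSeed n ψ) := by
  obtain ⟨hφs, hψs, hne, hint, hh, hm⟩ := hpar
  obtain ⟨hφl, hφh, hφp⟩ := hφs
  obtain ⟨hψl, hψh, hψp⟩ := hψs
  obtain ⟨b, c, r, rfl⟩ : ∃ b c r, φ = n :: b :: c :: r := by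
    match φ, hφl, hφh with
    | a :: b :: c :: r, _, hh2 =>
      simp only [List.head?_cons, Option.some.injEq] at hh2
      exact ⟨b, c, r, by rw [hh2]⟩
    | [], h, _ => simp at h; omega
    | [a], h, _ => simp at h; omega
    | [a, b2], h, _ => simp at h; omega
  obtain ⟨a2, r', rfl⟩ : ∃ a2 r', ψ = n :: a2 :: r' := by
    match ψ, hψl, hψh with
    | a :: b2 :: r', _, hh2 =>
      simp only [List.head?_cons, Option.some.injEq] at hh2
      exact ⟨b2, r', by rw [hh2]⟩
    | [], h, _ => simp at h; omega
    | [a], h, _ => simp at h; omega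
  simp only [IsPerm, seedToPerm] at hφp hψp
  have hbc : b = osucc n c := by
    by_contra hcon
    simp only [height, List.tail_cons, decRun, if_neg hcon] at hh
    omega
  have hmis : osucc n b = osucc n (osucc n a2) := by
    simpa [mis, List.getD] using hm
  have hb_mem : b ∈ List.range' 1 n := hφp.subset (by simp)
  have hc_mem : c ∈ List.range' 1 n := hφp.subset (by simp)
  have ha2_mem : a2 ∈ List.range' 1 n := hψp.subset (by simp)
  rw [List.mem_range'_1] at hb_mem hc_mem ha2_mem
  have hndφ : (n :: osucc n b :: b :: c :: r).Nodup := hφp.nodup_iff.mpr List.nodup_range'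
  have hndψ : (n :: osucc n a2 :: a2 :: r').Nodup := hψp.nodup_iff.mpr List.nodup_range'
  have hbn : b ≠ n := fun h => (List.nodup_cons.mp hndφ).1 (by rw [← h]; simp)
  have hcn : c ≠ n := fun h => (List.nodup_cons.mp hndφ).1 (by rw [← h]; simp)
  have ha2n : a2 ≠ n := fun h => (List.nodup_cons.mp hndψ).1 (by rw [← h]; simp)
  have hob : 1 ≤ osucc n a2 ∧ osucc n a2 ≤ n - 1 := by unfold osucc; split <;> omega
  have hxb : b = osucc n a2 :=
    osucc_inj' n b (osucc n a2) (by omega) (by omega) hob.1 hob.2 hmis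
  have ha2c : a2 = c :=
    osucc_inj' n a2 c (by omega) (by omega) (by omega) (by omega) (hxb.symm.trans hbc)
  have hca2 : c = a2 := ha2c.symm
  subst hca2
  rw [← hbc] at hψp
  have hmφ : mis n (n :: b :: c :: r) = osucc n b := by simp [mis, List.getD]
  have hmψ : mis n (n :: c :: r') = b := by simp [mis, List.getD, ← hbc]
  have htil : tildeSeed n (n :: c :: r') = n :: b :: c :: r' := by
    simp [tildeSeed, hmψ]
  have hψL : (n :: c :: r').length = n - 1 := by
    have := hψp.length_eq; simp at this ⊢; omega
  have hφL : (n :: b :: c :: r).length = n - 1 := by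
    have := hφp.length_eq; simp at this ⊢; omega
  have hins : (n :: c :: r').insertIdx 1 b = n :: b :: c :: r' := by
    simp [List.insertIdx_succ_cons, List.insertIdx_zero]
  have hkey : ∀ π, π ∈ perms n (n :: b :: c :: r) → π ∈ perms n (n :: c :: r') →
      ∃ j, π = (n :: b :: c :: r').rotate j := by
    rintro π ⟨i, j, hi, rfl⟩ ⟨i2, j2, hi2, hE2⟩
    rw [hmφ] at hE2 ⊢
    rw [hmψ] at hE2
    have hrot : ((n::b::c::r).insertIdx i (osucc n b)) ~r ((n::c::r').insertIdx i2 b) :=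
      List.IsRotated.trans ⟨j, rfl⟩ (List.IsRotated.symm ⟨j2, hE2.symm⟩)
    have hi2' : i2 = 1 := key_lemma n b c (osucc n b) r r' hn hφp hψp
      (by rw [hφL] at hi; exact hi) (by rw [hψL] at hi2; exact hi2) hrot
    subst hi2'
    rw [hins] at hE2
    exact ⟨j2, hE2⟩
  constructor
  · ext π
    simp only [Set.mem_inter_iff, cycle, Set.mem_setOf_eq, htil]
    constructor
    · rintro ⟨h1, h2⟩
      exact hkey π h1 h2
    · rintro ⟨j, rfl⟩
      constructor
      · obtain ⟨π0, h0φ, h0ψ⟩ := hint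
        obtain ⟨j0, hj0⟩ := hkey π0 h0φ h0ψ
        obtain ⟨i, j1, hi, hE⟩ := h0φ
        obtain ⟨m, hmrot⟩ := (List.IsRotated.symm ⟨j0, hj0.symm⟩ :
          π0 ~r (n :: b :: c :: r'))
        refine ⟨i, j1 + (m + j), hi, ?_⟩
        rw [← List.rotate_rotate, ← hE, ← List.rotate_rotate, hmrot]
      · exact ⟨1, j, by rw [hψL]; omega, by rw [hmψ, hins]⟩
  · rintro i ⟨-, hson⟩
    rw [sig_iterate] at hson
    obtain ⟨m, hm2⟩ := (List.IsRotated.symm ⟨i, rfl⟩ :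
      ((seedShift n (n::b::c::r) i).rotate i) ~r (seedShift n (n::b::c::r) i))
    rw [htil]
    refine ⟨m, ?_⟩
    rw [htil] at hson
    rw [← hson]
    exact hm2.symm
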